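/- Under the assumptions that K̃ = (1-p)K + pK̄ with K positive semidefinite of trace at most n, K̄ = (1/D)J, λ > 0, and (n/λ)(1-p)(1+1/D) < 1, the geometric difference satisfies ‖(K̃+λI)^{-1} − (K̄+λI)^{-1}‖₂ ≤ [ (n/λ²)(1-p)(1+1/D) ] / [ 1 − (n/λ)(1-p)(1+1/D) ]. -/

import Mathlib

set_option synthInstance.maxHeartbeats 1000000
set_option maxHeartbeats 2000000


open Matrix

/-- The spectral (ℓ²-operator) norm of a real square matrix. -/
noncomputable def matrixSpectralNorm {n : ℕ} (A : Matrix (Fin n) (Fin n) ℝ) : ℝ :=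
  ‖Matrix.toEuclideanCLM (𝕜 := ℝ) A‖

section Aux

variable {n : ℕ}

lemma psd_smul {c : ℝ} (hc : 0 ≤ c) {M : Matrix (Fin n) (Fin n) ℝ}
    (hM : M.PosSemidef) : (c • M).PosSemidef := by
  refine Matrix.PosSemidef.of_dotProduct_mulVec_nonneg ?_ fun x => ?_
  · have h1 := hM.1
    unfold Matrix.IsHermitian at h1 ⊢
    rw [conjTranspose_smul, h1, star_trivial]
  · rw [smul_mulVec, dotProduct_smul]
    exact smul_nonneg hc (hM.dotProduct_mulVec_nonneg x)

lemma psd_all_one {J : Matrix (Fin n) (Fin n) ℝ} (hJ : ∀ i j, J i j = 1) :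
    J.PosSemidef := by
  refine Matrix.PosSemidef.of_dotProduct_mulVec_nonneg ?_ fun x => ?_
  · ext i j
    simp [conjTranspose_apply, hJ]
  · have : star x ⬝ᵥ (J *ᵥ x) = (∑ i, x i) * (∑ i, x i) := by
      simp only [star_trivial, dotProduct, mulVec, hJ, one_mul, Finset.sum_mul]
    rw [this]
    exact mul_self_nonneg _

/-- operator norm is at most the Frobenius-type bound -/
lemma spectralNorm_le_sqrt (M : Matrix (Fin n) (Fin n) ℝ) :
    matrixSpectralNorm M ≤ Real.sqrt (∑ i, ∑ j, (M i j) ^ 2) := by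
  apply ContinuousLinearMap.opNorm_le_bound _ (Real.sqrt_nonneg _)
  intro x
  set x' : Fin n → ℝ := WithLp.equiv 2 _ x with hx'
  have happ : ∀ i, (Matrix.toEuclideanCLM (𝕜 := ℝ) M x) i = ∑ j, M i j * x' j := by
    intro i
    have := Matrix.ofLp_toEuclideanCLM (𝕜 := ℝ) M x
    have h2 : (Matrix.toEuclideanCLM (𝕜 := ℝ) M x) i
        = (Matrix.toLin' M x') i := congrFun this i
    rw [h2, Matrix.toLin'_apply]
    rfl
  have hnorm : ‖Matrix.toEuclideanCLM (𝕜 := ℝ) M x‖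
      = Real.sqrt (∑ i, (∑ j, M i j * x' j) ^ 2) := by
    rw [EuclideanSpace.norm_eq]
    congr 1
    refine Finset.sum_congr rfl fun i _ => ?_
    rw [happ i, Real.norm_eq_abs, sq_abs]
  have hxnorm : ‖x‖ = Real.sqrt (∑ j, x' j ^ 2) := by
    rw [EuclideanSpace.norm_eq]
    congr 1
    refine Finset.sum_congr rfl fun j _ => ?_
    rw [Real.norm_eq_abs, sq_abs]
    rfl
  rw [hnorm, hxnorm, ← Real.sqrt_mul (by positivity)]
  apply Real.sqrt_le_sqrt
  rw [Finset.sum_mul]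
  refine Finset.sum_le_sum fun i _ => ?_
  calc (∑ j, M i j * x' j) ^ 2
      ≤ (∑ j, (M i j) ^ 2) * ∑ j, x' j ^ 2 :=
        Finset.sum_mul_sq_le_sq_mul_sq _ _ _
    _ = _ := rfl

lemma entry_sq_le {K : Matrix (Fin n) (Fin n) ℝ} (hK : K.PosSemidef) (i j : Fin n) :
    K i j ^ 2 ≤ K i i * K j j := by
  have hsym : K j i = K i j := by
    have := congrFun (congrFun hK.1 i) j
    simpa [conjTranspose_apply] using this
  have hq : ∀ t : ℝ, 0 ≤ K i i * (t * t) + (2 * K i j) * t + K j j := by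
    intro t
    have h := hK.dotProduct_mulVec_nonneg (Pi.single i t + Pi.single j 1)
    have hexp : star (Pi.single i t + Pi.single j 1) ⬝ᵥ
        (K *ᵥ (Pi.single i t + Pi.single j 1))
        = K i i * (t * t) + (2 * K i j) * t + K j j := by
      rw [star_trivial, mulVec_add, dotProduct_add, add_dotProduct, add_dotProduct,
        Matrix.mulVec_single, Matrix.mulVec_single]
      simp only [single_dotProduct]
      simp only [Pi.smul_apply, Matrix.col_apply, op_smul_eq_mul, hsym]
      ring
    rw [hexp] at h
    exact h
  have hd := discrim_le_zero hq
  unfold discrim at hd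
  nlinarith [hd]

lemma trace_nonneg_diag {K : Matrix (Fin n) (Fin n) ℝ} (hK : K.PosSemidef) (i : Fin n) :
    0 ≤ K i i := by
  have h := hK.dotProduct_mulVec_nonneg (Pi.single i 1)
  rw [star_trivial, Matrix.mulVec_single] at h
  simp only [single_dotProduct] at h
  simpa using h

/-- spectral norm of a PSD matrix is at most its trace -/
lemma spectralNorm_le_trace {K : Matrix (Fin n) (Fin n) ℝ} (hK : K.PosSemidef) :
    matrixSpectralNorm K ≤ K.trace := by
  have htr : K.trace = ∑ i, K i i := rfl
  have htrn : 0 ≤ K.trace := by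
    rw [htr]; exact Finset.sum_nonneg fun i _ => trace_nonneg_diag hK i
  refine (spectralNorm_le_sqrt K).trans ?_
  rw [show K.trace = Real.sqrt (K.trace ^ 2) by rw [Real.sqrt_sq htrn]]
  apply Real.sqrt_le_sqrt
  rw [htr, sq, Finset.sum_mul_sum]
  exact Finset.sum_le_sum fun i _ => Finset.sum_le_sum fun j _ => entry_sq_le hK i j

/-- norm bound for the inverse of PSD + lam • 1 -/
lemma inv_spectralNorm_le {M : Matrix (Fin n) (Fin n) ℝ} (hM : M.PosSemidef)
    {lam : ℝ} (hlam : 0 < lam) :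
    matrixSpectralNorm (M + lam • 1)⁻¹ ≤ 1 / lam := by
  set B := M + lam • (1 : Matrix (Fin n) (Fin n) ℝ) with hB
  have hpd : B.PosDef := by
    refine Matrix.PosDef.posSemidef_add hM ?_
    rw [Matrix.smul_one_eq_diagonal]
    exact Matrix.PosDef.diagonal fun _ => hlam
  have hdet : IsUnit B.det := (Matrix.isUnit_iff_isUnit_det _).mp hpd.isUnit
  apply ContinuousLinearMap.opNorm_le_bound _ (by positivity)
  intro y
  set x : EuclideanSpace ℝ (Fin n) := Matrix.toEuclideanCLM (𝕜 := ℝ) B⁻¹ y with hx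
  have hBx : Matrix.toEuclideanCLM (𝕜 := ℝ) B x = y := by
    rw [hx, ← ContinuousLinearMap.mul_apply, ← _root_.map_mul,
      Matrix.mul_nonsing_inv _ hdet, _root_.map_one, ContinuousLinearMap.one_apply]
  set x' : Fin n → ℝ := WithLp.equiv 2 _ x with hx'
  have hinner : (inner ℝ x y : ℝ) = star x' ⬝ᵥ (B *ᵥ x') := by
    rw [← hBx, EuclideanSpace.inner_eq_star_dotProduct, Matrix.ofLp_toEuclideanCLM, dotProduct_comm]
    rfl
  have hlow : lam * (‖x‖ * ‖x‖) ≤ (inner ℝ x y : ℝ) := by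
    rw [hinner, hB, add_mulVec, dotProduct_add, smul_mulVec, one_mulVec,
      dotProduct_smul]
    have h1 : 0 ≤ star x' ⬝ᵥ (M *ᵥ x') := hM.dotProduct_mulVec_nonneg x'
    have h2 : star x' ⬝ᵥ x' = ‖x‖ * ‖x‖ := by
      have := real_inner_self_eq_norm_mul_norm x
      rw [← this, EuclideanSpace.inner_eq_star_dotProduct]
      exact dotProduct_comm _ _
    rw [smul_eq_mul, h2]
    linarith
  have hup : (inner ℝ x y : ℝ) ≤ ‖x‖ * ‖y‖ := real_inner_le_norm x y
  have key : lam * ‖x‖ * ‖x‖ ≤ ‖y‖ * ‖x‖ := by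
    calc lam * ‖x‖ * ‖x‖ = lam * (‖x‖ * ‖x‖) := by ring
      _ ≤ ‖x‖ * ‖y‖ := hlow.trans hup
      _ = ‖y‖ * ‖x‖ := by ring
  rcases eq_or_lt_of_le (norm_nonneg x) with h0 | h0
  · rw [← h0]
    positivity
  · have : lam * ‖x‖ ≤ ‖y‖ := le_of_mul_le_mul_right key h0
    rw [div_mul_eq_mul_div, le_div_iff₀ hlam]
    linarith

end Aux

/-- Bound on the geometric difference between the noisy kernel matrix and the
worst-case kernel matrix. -/
theorem geometric_difference_bound
    (n : ℕ) (hn : 1 ≤ n) (D : ℝ) (hD : 0 < D) (p : ℝ) (hp0 : 0 ≤ p) (hp1 : p ≤ 1)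
    (lam : ℝ) (hlam : 0 < lam)
    (K : Matrix (Fin n) (Fin n) ℝ) (hK : K.PosSemidef) (hKtr : K.trace ≤ n)
    (J : Matrix (Fin n) (Fin n) ℝ) (hJ : ∀ i j, J i j = 1)
    (hsmall : (n / lam) * (1 - p) * (1 + 1 / D) < 1) :
    matrixSpectralNorm
        ((((1 - p) • K + p • ((1 / D) • J)) + lam • (1 : Matrix (Fin n) (Fin n) ℝ))⁻¹
          - ((1 / D) • J + lam • (1 : Matrix (Fin n) (Fin n) ℝ))⁻¹)
      ≤ ((n / lam ^ 2) * (1 - p) * (1 + 1 / D))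
          / (1 - (n / lam) * (1 - p) * (1 + 1 / D)) := by
  have h1p : (0:ℝ) ≤ 1 - p := by linarith
  set Kbar : Matrix (Fin n) (Fin n) ℝ := (1 / D) • J with hKbar
  set Kt : Matrix (Fin n) (Fin n) ℝ := (1 - p) • K + p • Kbar with hKt
  set A : Matrix (Fin n) (Fin n) ℝ := Kt + lam • 1 with hA
  set B : Matrix (Fin n) (Fin n) ℝ := Kbar + lam • 1 with hB
  have hJpsd : J.PosSemidef := psd_all_one hJ
  have hKbarpsd : Kbar.PosSemidef := psd_smul (by positivity) hJpsd
  have hKtpsd : Kt.PosSemidef := (psd_smul h1p hK).add (psd_smul hp0 hKbarpsd)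
  have hApd : A.PosDef := Matrix.PosDef.posSemidef_add hKtpsd (by
    rw [Matrix.smul_one_eq_diagonal]; exact Matrix.PosDef.diagonal fun _ => hlam)
  have hBpd : B.PosDef := Matrix.PosDef.posSemidef_add hKbarpsd (by
    rw [Matrix.smul_one_eq_diagonal]; exact Matrix.PosDef.diagonal fun _ => hlam)
  have hAdet : IsUnit A.det := (Matrix.isUnit_iff_isUnit_det _).mp hApd.isUnit
  have hBdet : IsUnit B.det := (Matrix.isUnit_iff_isUnit_det _).mp hBpd.isUnit
  -- the resolvent identity
  have hid : A⁻¹ - B⁻¹ = A⁻¹ * (B - A) * B⁻¹ := by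
    have h1 : A⁻¹ * (B - A) * B⁻¹
        = A⁻¹ * (B * B⁻¹) - (A⁻¹ * A) * B⁻¹ := by noncomm_ring
    rw [Matrix.mul_nonsing_inv _ hBdet, Matrix.nonsing_inv_mul _ hAdet,
      mul_one, one_mul] at h1
    exact h1.symm
  -- norm bounds
  have bA : matrixSpectralNorm A⁻¹ ≤ 1 / lam := inv_spectralNorm_le hKtpsd hlam
  have bB : matrixSpectralNorm B⁻¹ ≤ 1 / lam := inv_spectralNorm_le hKbarpsd hlam
  have hKn : matrixSpectralNorm K ≤ (n : ℝ) :=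
    (spectralNorm_le_trace hK).trans hKtr
  have hJn : matrixSpectralNorm Kbar ≤ (n : ℝ) / D := by
    refine (spectralNorm_le_sqrt Kbar).trans (le_of_eq ?_)
    have : ∀ i j : Fin n, (Kbar i j) ^ 2 = (1 / D) ^ 2 := by
      intro i j
      rw [hKbar]
      simp [hJ i j]
    calc Real.sqrt (∑ i, ∑ j, (Kbar i j) ^ 2)
        = Real.sqrt ((n : ℝ) ^ 2 * (1 / D) ^ 2) := by
          congr 1
          simp only [this, Finset.sum_const, Finset.card_univ, Fintype.card_fin,
            nsmul_eq_mul]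
          ring
      _ = (n : ℝ) * (1 / D) := by
          rw [← mul_pow, Real.sqrt_sq (by positivity)]
      _ = (n : ℝ) / D := by ring
  have bBA : matrixSpectralNorm (B - A) ≤ (n : ℝ) * (1 - p) * (1 + 1 / D) := by
    have hdiff : B - A = (1 - p) • Kbar - (1 - p) • K := by
      rw [hA, hB, hKt]
      module
    have : matrixSpectralNorm (B - A) ≤ (1 - p) * matrixSpectralNorm Kbar
        + (1 - p) * matrixSpectralNorm K := by
      unfold matrixSpectralNorm
      rw [hdiff, map_sub]
      refine (norm_sub_le _ _).trans ?_
      simp only [_root_.map_smul]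
      have e1 := norm_smul_le (1 - p) (Matrix.toEuclideanCLM (𝕜 := ℝ) Kbar)
      have e2 := norm_smul_le (1 - p) (Matrix.toEuclideanCLM (𝕜 := ℝ) K)
      rw [Real.norm_eq_abs, abs_of_nonneg h1p] at e1 e2
      linarith
    refine this.trans ?_
    have h2 : (1 - p) * matrixSpectralNorm Kbar + (1 - p) * matrixSpectralNorm K
        ≤ (1 - p) * ((n : ℝ) / D) + (1 - p) * (n : ℝ) := by
      gcongr
    refine h2.trans_eq ?_
    ring
  -- combine
  have hnA : 0 ≤ matrixSpectralNorm A⁻¹ := norm_nonneg _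
  have hnBA : 0 ≤ matrixSpectralNorm (B - A) := norm_nonneg _
  have main : matrixSpectralNorm (A⁻¹ - B⁻¹)
      ≤ (1 / lam) * ((n : ℝ) * (1 - p) * (1 + 1 / D)) * (1 / lam) := by
    have h1 : matrixSpectralNorm (A⁻¹ - B⁻¹)
        ≤ matrixSpectralNorm A⁻¹ * matrixSpectralNorm (B - A) * matrixSpectralNorm B⁻¹ := by
      unfold matrixSpectralNorm
      rw [hid, _root_.map_mul, _root_.map_mul]
      exact (norm_mul_le _ _).trans (by
        gcongr
        exact norm_mul_le _ _)
    refine h1.trans ?_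
    have hMn : 0 ≤ (1 / lam) * ((n : ℝ) * (1 - p) * (1 + 1 / D)) := by
      refine mul_nonneg (by positivity) ?_
      exact mul_nonneg (mul_nonneg (by positivity) h1p) (by positivity)
    exact mul_le_mul (mul_le_mul bA bBA hnBA (by positivity)) bB (norm_nonneg _) hMn
  refine main.trans ?_
  -- arithmetic
  set t : ℝ := (n / lam) * (1 - p) * (1 + 1 / D) with ht
  have htn : 0 ≤ t := by
    have h1 : (0:ℝ) ≤ (n:ℝ) / lam := by positivity
    have h2 : (0:ℝ) ≤ 1 + 1 / D := by positivity
    rw [ht]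
    exact mul_nonneg (mul_nonneg h1 h1p) h2
  have hden : 0 < 1 - t := by linarith
  rw [le_div_iff₀ hden]
  have hnum : (n / lam ^ 2) * (1 - p) * (1 + 1 / D) = t / lam := by
    rw [ht]; ring
  have hlhs : (1 / lam) * ((n : ℝ) * (1 - p) * (1 + 1 / D)) * (1 / lam) = t / lam := by
    rw [ht]; ring
  rw [hnum, hlhs]
  have htl : 0 ≤ t / lam := by positivity
  nlinarith [mul_nonneg htl htn]
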